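/- arXiv:1305.6605 — 3 statements merged into one kernel-verified Lean document; each statement's English description precedes it below -/
import Mathlib

section
/- K(r) is asymptotically equivalent to (1/2)·ln(1/(1-r)) as r → 1⁻; that is, K(r) / ((1/2)·ln(1/(1-r))) → 1 as r → 1⁻. -/
open Real Filter Set Topology

noncomputable def ellK (r : ℝ) : ℝ :=
  ∫ ξ in (0:ℝ)..1, 1 / Real.sqrt ((1 - ξ ^ 2) * (1 - r ^ 2 * ξ ^ 2))

section aux
open MeasureTheory intervalIntegral


lemma ae_ne_one {s : Set ℝ} : ∀ᵐ x ∂(volume.restrict s), x ≠ 1 := by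
  refine ae_restrict_of_ae (ae_iff.2 ?_)
  simp only [not_not]
  have : {x : ℝ | x = 1} = {1} := by ext y; simp
  rw [this]; exact Real.volume_singleton

lemma int_inv_sqrt_one_sub : IntervalIntegrable (fun ξ : ℝ => 1 / Real.sqrt (1 - ξ)) volume 0 1 := by
  have base : IntervalIntegrable (fun x : ℝ => x ^ (-(1/2) : ℝ)) volume 0 1 :=
    intervalIntegrable_rpow' (by norm_num)
  have comp : IntervalIntegrable (fun x : ℝ => (1 - x) ^ (-(1/2) : ℝ)) volume 0 1 := by
    simpa using (base.comp_sub_left 1).symm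
  refine comp.mono_fun ?_ ?_
  · exact ((Real.continuous_sqrt.comp (continuous_const.sub continuous_id)).measurable.const_div 1).aestronglyMeasurable
  · refine (ae_restrict_mem measurableSet_uIoc).mono fun x hx => ?_
    rw [Set.uIoc_of_le (by norm_num : (0:ℝ) ≤ 1)] at hx
    have h1 : (0:ℝ) ≤ 1 - x := by linarith [hx.2]
    show ‖1 / Real.sqrt (1 - x)‖ ≤ ‖(1 - x) ^ (-(1/2) : ℝ)‖
    rw [Real.norm_eq_abs, Real.norm_eq_abs, abs_of_nonneg (by positivity), abs_of_nonneg (by positivity)]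
    rw [Real.rpow_neg h1, ← Real.sqrt_eq_rpow, one_div]

lemma int_h {r : ℝ} (hr0 : 0 ≤ r) (hr1 : r < 1) :
    IntervalIntegrable (fun ξ : ℝ => 1 / Real.sqrt ((1 - ξ) * (1 - r * ξ))) volume 0 1 := by
  have base := int_inv_sqrt_one_sub.const_mul (Real.sqrt (1 - r))⁻¹
  refine base.mono_fun ?_ ?_
  · apply Measurable.aestronglyMeasurable
    apply Measurable.const_div
    exact Real.continuous_sqrt.measurable.comp (by fun_prop)
  · refine ((ae_restrict_mem measurableSet_uIoc).and ae_ne_one).mono fun x ⟨hx, hx1⟩ => ?_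
    rw [Set.uIoc_of_le (by norm_num : (0:ℝ) ≤ 1)] at hx
    have hxlt : x < 1 := lt_of_le_of_ne hx.2 hx1
    have hA : 0 < 1 - x := by linarith
    have hB : 0 < 1 - r * x := by nlinarith [hx.1]
    have h1r : 0 < 1 - r := by linarith
    have key : Real.sqrt (1 - r) * Real.sqrt (1 - x) ≤ Real.sqrt ((1 - x) * (1 - r * x)) := by
      rw [Real.sqrt_mul hA.le]
      have h2 : Real.sqrt (1 - r) ≤ Real.sqrt (1 - r * x) := Real.sqrt_le_sqrt (by nlinarith [hx.1])
      calc Real.sqrt (1 - r) * Real.sqrt (1 - x) = Real.sqrt (1 - x) * Real.sqrt (1 - r) := by ring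
      _ ≤ Real.sqrt (1 - x) * Real.sqrt (1 - r * x) :=
        mul_le_mul_of_nonneg_left h2 (Real.sqrt_nonneg _)
    show ‖1 / Real.sqrt ((1 - x) * (1 - r * x))‖ ≤ ‖(Real.sqrt (1 - r))⁻¹ * (1 / Real.sqrt (1 - x))‖
    rw [Real.norm_eq_abs, Real.norm_eq_abs, abs_of_nonneg (by positivity), abs_of_nonneg (by positivity)]
    have e : (Real.sqrt (1-r))⁻¹ * (1/Real.sqrt (1-x)) = (Real.sqrt (1-r) * Real.sqrt (1-x))⁻¹ := by
      rw [mul_inv, one_div]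
    rw [one_div, e]
    exact inv_anti₀ (by positivity) key

lemma int_f {r : ℝ} (hr0 : 0 ≤ r) (hr1 : r < 1) :
    IntervalIntegrable (fun ξ : ℝ => 1 / Real.sqrt ((1 - ξ^2) * (1 - r^2 * ξ^2))) volume 0 1 := by
  refine (int_h hr0 hr1).mono_fun ?_ ?_
  · apply Measurable.aestronglyMeasurable
    apply Measurable.const_div
    exact Real.continuous_sqrt.measurable.comp (by fun_prop)
  · refine ((ae_restrict_mem measurableSet_uIoc).and ae_ne_one).mono fun x ⟨hx, hx1⟩ => ?_
    rw [Set.uIoc_of_le (by norm_num : (0:ℝ) ≤ 1)] at hx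
    have hxlt : x < 1 := lt_of_le_of_ne hx.2 hx1
    have hx0 : 0 < x := hx.1
    have hA : 0 < 1 - x := by linarith
    have hB : 0 < 1 - r * x := by nlinarith
    show ‖1 / Real.sqrt ((1 - x^2) * (1 - r^2 * x^2))‖ ≤ ‖1 / Real.sqrt ((1 - x) * (1 - r * x))‖
    rw [Real.norm_eq_abs, Real.norm_eq_abs, abs_of_nonneg (by positivity), abs_of_nonneg (by positivity)]
    rw [one_div, one_div]
    apply inv_anti₀ (by positivity)
    apply Real.sqrt_le_sqrt
    have h1 : 1 ≤ (1+x)*(1+r*x) := by nlinarith [mul_nonneg hr0 hx0.le]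
    calc (1-x) * (1-r*x) = (1-x)*(1-r*x)*1 := by ring
      _ ≤ (1-x)*(1-r*x)*((1+x)*(1+r*x)) :=
          mul_le_mul_of_nonneg_left h1 (mul_pos hA hB).le
      _ = (1 - x^2) * (1 - r^2 * x^2) := by ring

lemma int_one_div_lin {r : ℝ} (hr0 : 0 < r) (hr1 : r < 1) :
    ∫ ξ in (0:ℝ)..1, 1 / (1 - r * ξ) = Real.log (1 / (1 - r)) / r := by
  have key : ∫ ξ in (0:ℝ)..1, 1 / (1 - r * ξ)
      = (fun ξ : ℝ => -Real.log (1 - r * ξ) / r) 1 - (fun ξ : ℝ => -Real.log (1 - r * ξ) / r) 0 := by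
    apply integral_eq_sub_of_hasDerivAt (f := fun ξ : ℝ => -Real.log (1 - r * ξ) / r) (f' := fun ξ : ℝ => 1 / (1 - r * ξ))
    · intro x hx
      rw [Set.uIcc_of_le (by norm_num : (0:ℝ) ≤ 1)] at hx
      have hB : 0 < 1 - r * x := by nlinarith [hx.1, hx.2]
      have h1 : HasDerivAt (fun ξ : ℝ => 1 - r * ξ) (-r) x := by
        simpa using ((hasDerivAt_id x).const_mul r).const_sub 1
      have h2 := (Real.hasDerivAt_log (ne_of_gt hB)).comp x h1
      have h3 := (h2.neg).div_const r
      convert h3 using 1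
      · rfl
      · rfl
      · field_simp
    · apply ContinuousOn.intervalIntegrable
      apply ContinuousOn.div continuousOn_const
      · fun_prop
      · intro x hx
        rw [Set.uIcc_of_le (by norm_num : (0:ℝ) ≤ 1)] at hx
        have : 0 < 1 - r * x := by nlinarith [hx.1, hx.2]
        exact ne_of_gt this
  rw [key]
  simp only [mul_one, mul_zero, sub_zero, Real.log_one]
  rw [one_div, Real.log_inv]
  ring

lemma int_h_eq {r : ℝ} (hr0 : 0 < r) (hr1 : r < 1) :
    ∫ ξ in (0:ℝ)..1, 1 / Real.sqrt ((1 - ξ) * (1 - r * ξ))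
      = (2 / Real.sqrt r) * Real.log (1 + Real.sqrt r)
        + (1 / Real.sqrt r) * Real.log (1 / (1 - r)) := by
  set sr := Real.sqrt r with hsr
  have hsr0 : 0 < sr := Real.sqrt_pos.2 hr0
  have hsr2 : sr ^ 2 = r := Real.sq_sqrt hr0.le
  set G : ℝ → ℝ := fun ξ => -(2 / sr) * Real.log (sr * Real.sqrt (1 - ξ) + Real.sqrt (1 - r * ξ)) with hG
  have hu_pos : ∀ x ∈ Icc (0:ℝ) 1, 0 < sr * Real.sqrt (1 - x) + Real.sqrt (1 - r * x) := by
    intro x hx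
    have hB : 0 < 1 - r * x := by nlinarith [hx.1, hx.2]
    have : 0 < Real.sqrt (1 - r * x) := Real.sqrt_pos.2 hB
    positivity
  have hcont : ContinuousOn G (Icc 0 1) := by
    apply ContinuousOn.mul continuousOn_const
    apply ContinuousOn.log
    · fun_prop
    · exact fun x hx => ne_of_gt (hu_pos x hx)
  have hderiv : ∀ x ∈ Ioo (0:ℝ) 1,
      HasDerivWithinAt G (1 / Real.sqrt ((1 - x) * (1 - r * x))) (Ioi x) x := by
    intro x hx
    have hA : 0 < 1 - x := by linarith [hx.2]
    have hB : 0 < 1 - r * x := by nlinarith [hx.1, hx.2]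
    set sA := Real.sqrt (1 - x) with hsA
    set sB := Real.sqrt (1 - r * x) with hsB
    have hsA0 : 0 < sA := Real.sqrt_pos.2 hA
    have hsB0 : 0 < sB := Real.sqrt_pos.2 hB
    have hsA2 : sA ^ 2 = 1 - x := Real.sq_sqrt hA.le
    have hsB2 : sB ^ 2 = 1 - r * x := Real.sq_sqrt hB.le
    have hu0 : 0 < sr * sA + sB := by positivity
    -- derivative of sqrt(1-ξ)
    have d1 : HasDerivAt (fun ξ : ℝ => Real.sqrt (1 - ξ)) (1 / (2 * sA) * (-1)) x := by
      have i1 : HasDerivAt (fun ξ : ℝ => 1 - ξ) (-1) x := by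
        simpa using (hasDerivAt_id x).const_sub 1
      exact (Real.hasDerivAt_sqrt (ne_of_gt hA)).comp x i1
    have d2 : HasDerivAt (fun ξ : ℝ => Real.sqrt (1 - r * ξ)) (1 / (2 * sB) * (-r)) x := by
      have i2 : HasDerivAt (fun ξ : ℝ => 1 - r * ξ) (-r) x := by
        simpa using ((hasDerivAt_id x).const_mul r).const_sub 1
      exact (Real.hasDerivAt_sqrt (ne_of_gt hB)).comp x i2
    have du : HasDerivAt (fun ξ : ℝ => sr * Real.sqrt (1 - ξ) + Real.sqrt (1 - r * ξ))
        (sr * (1 / (2 * sA) * (-1)) + 1 / (2 * sB) * (-r)) x := (d1.const_mul sr).add d2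
    have dlog := (Real.hasDerivAt_log (ne_of_gt hu0)).comp x du
    have dG : HasDerivAt G (-(2 / sr) * ((sr * sA + sB)⁻¹ * (sr * (1 / (2 * sA) * (-1)) + 1 / (2 * sB) * (-r)))) x :=
      dlog.const_mul (-(2 / sr))
    have heq : -(2 / sr) * ((sr * sA + sB)⁻¹ * (sr * (1 / (2 * sA) * (-1)) + 1 / (2 * sB) * (-r)))
        = 1 / Real.sqrt ((1 - x) * (1 - r * x)) := by
      rw [Real.sqrt_mul hA.le, ← hsA, ← hsB]
      rw [← hsr2]
      field_simp
      ring
    rw [heq] at dG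
    exact dG.hasDerivWithinAt
  have key := integral_eq_sub_of_hasDeriv_right_of_le (by norm_num) hcont hderiv (int_h hr0.le hr1)
  rw [key, hG]
  have h1r : (0:ℝ) < 1 - r := by linarith
  norm_num
  rw [Real.log_sqrt h1r.le]
  field_simp
  ring_nf

lemma int_inv_sqrt_one_sub_eq : ∫ ξ in (0:ℝ)..1, 1 / Real.sqrt (1 - ξ) = 2 := by
  have hcont : ContinuousOn (fun ξ : ℝ => -2 * Real.sqrt (1 - ξ)) (Icc 0 1) := by fun_prop
  have hderiv : ∀ x ∈ Ioo (0:ℝ) 1,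
      HasDerivWithinAt (fun ξ : ℝ => -2 * Real.sqrt (1 - ξ)) (1 / Real.sqrt (1 - x)) (Ioi x) x := by
    intro x hx
    have hA : 0 < 1 - x := by linarith [hx.2]
    have d1 : HasDerivAt (fun ξ : ℝ => Real.sqrt (1 - ξ)) (1 / (2 * Real.sqrt (1 - x)) * (-1)) x := by
      have i1 : HasDerivAt (fun ξ : ℝ => 1 - ξ) (-1) x := by
        simpa using (hasDerivAt_id x).const_sub 1
      exact (Real.hasDerivAt_sqrt (ne_of_gt hA)).comp x i1
    have d2 := d1.const_mul (-2 : ℝ)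
    have e : (-2 : ℝ) * (1 / (2 * Real.sqrt (1 - x)) * (-1)) = 1 / Real.sqrt (1 - x) := by
      have : Real.sqrt (1 - x) ≠ 0 := ne_of_gt (Real.sqrt_pos.2 hA)
      field_simp
    rw [e] at d2
    exact d2.hasDerivWithinAt
  have key := integral_eq_sub_of_hasDeriv_right_of_le (by norm_num) hcont hderiv int_inv_sqrt_one_sub
  rw [key]
  norm_num

lemma ellK_ge {r : ℝ} (hr0 : 1/2 ≤ r) (hr1 : r < 1) :
    Real.log (1 / (1 - r)) / 2 ≤ ellK r := by
  have hr0' : 0 < r := by linarith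
  have hint1 : IntervalIntegrable (fun ξ : ℝ => 1/2 * (1 / (1 - r * ξ))) volume 0 1 := by
    apply ContinuousOn.intervalIntegrable
    apply ContinuousOn.mul continuousOn_const
    apply ContinuousOn.div continuousOn_const (by fun_prop)
    intro x hx
    rw [Set.uIcc_of_le (by norm_num : (0:ℝ) ≤ 1)] at hx
    have : 0 < 1 - r * x := by nlinarith [hx.1, hx.2]
    exact ne_of_gt this
  have hmono : ∫ ξ in (0:ℝ)..1, 1/2 * (1 / (1 - r * ξ)) ≤ ellK r := by
    rw [ellK]
    apply integral_mono_ae_restrict (by norm_num) hint1 (int_f hr0'.le hr1)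
    refine ((ae_restrict_mem measurableSet_Icc).and ae_ne_one).mono fun x ⟨hx, hx1⟩ => ?_
    have hx0 : (0:ℝ) ≤ x := hx.1
    have hxlt : x < 1 := lt_of_le_of_ne hx.2 hx1
    have hB : 0 < 1 - r * x := by nlinarith
    have hx2 : x^2 < 1 := by nlinarith
    have hr2 : r^2 * x^2 < 1 := by nlinarith [sq_nonneg r, sq_nonneg x, sq_nonneg (r*x)]
    have hD : 0 < (1 - x^2) * (1 - r^2 * x^2) := mul_pos (by linarith) (by linarith)
    have h1 : 1 - x^2 ≤ 2 * (1 - r * x) := by nlinarith [sq_nonneg (1-x)]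
    have h2 : 1 - r^2 * x^2 ≤ 2 * (1 - r * x) := by nlinarith [sq_nonneg (1 - r*x)]
    have hle : Real.sqrt ((1 - x^2) * (1 - r^2 * x^2)) ≤ 2 * (1 - r * x) := by
      have hsq : (1 - x^2) * (1 - r^2 * x^2) ≤ (2 * (1 - r * x))^2 := by
        calc (1 - x^2) * (1 - r^2 * x^2) ≤ (2 * (1 - r * x)) * (2 * (1 - r * x)) :=
              mul_le_mul h1 h2 (by linarith) (by positivity)
          _ = (2 * (1 - r * x))^2 := by ring
      calc Real.sqrt ((1 - x^2) * (1 - r^2 * x^2)) ≤ Real.sqrt ((2 * (1 - r * x))^2) :=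
            Real.sqrt_le_sqrt hsq
        _ = 2 * (1 - r * x) := Real.sqrt_sq (by positivity)
    show 1/2 * (1 / (1 - r * x)) ≤ 1 / Real.sqrt ((1 - x^2) * (1 - r^2 * x^2))
    have e : 1/2 * (1 / (1 - r * x)) = 1 / (2 * (1 - r * x)) := by
      field_simp
    rw [e]
    exact one_div_le_one_div_of_le (Real.sqrt_pos.2 hD) hle
  have hcomp : ∫ ξ in (0:ℝ)..1, 1/2 * (1 / (1 - r * ξ))
      = 1/2 * (Real.log (1 / (1 - r)) / r) := by
    rw [intervalIntegral.integral_const_mul, int_one_div_lin hr0' hr1]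
  have hL0 : 0 ≤ Real.log (1 / (1 - r)) := by
    apply Real.log_nonneg
    rw [le_one_div (by norm_num) (by linarith)]
    linarith
  have hfin : Real.log (1 / (1 - r)) / 2 ≤ 1/2 * (Real.log (1 / (1 - r)) / r) := by
    have h9 : Real.log (1 / (1 - r)) ≤ Real.log (1 / (1 - r)) / r := by
      rw [le_div_iff₀ hr0']
      nlinarith
    linarith
  linarith [hmono, hcomp.le, hfin]

set_option maxHeartbeats 1000000 in
lemma ellK_le {r : ℝ} (hr0 : 1/2 ≤ r) (hr1 : r < 1) :
    ellK r ≤ Real.log (1 / (1 - r)) / 2 + 5 := by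
  have hr0' : 0 < r := by linarith
  have hint2 : IntervalIntegrable (fun ξ : ℝ => 1 + 1 / Real.sqrt (1 - ξ)) volume 0 1 :=
    intervalIntegrable_const.add int_inv_sqrt_one_sub
  have hint1 : IntervalIntegrable
      (fun ξ : ℝ => 1/2 * (1 / Real.sqrt ((1 - ξ) * (1 - r * ξ)))) volume 0 1 :=
    (int_h hr0'.le hr1).const_mul (1/2)
  have hmono : ellK r ≤ ∫ ξ in (0:ℝ)..1,
      (1/2 * (1 / Real.sqrt ((1 - ξ) * (1 - r * ξ))) + (1 + 1 / Real.sqrt (1 - ξ))) := by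
    rw [ellK]
    apply integral_mono_ae_restrict (by norm_num) (int_f hr0'.le hr1) (hint1.add hint2)
    refine ((ae_restrict_mem measurableSet_Icc).and ae_ne_one).mono fun x ⟨hx, hx1⟩ => ?_
    have hx0 : (0:ℝ) ≤ x := hx.1
    have hxlt : x < 1 := lt_of_le_of_ne hx.2 hx1
    have hA : 0 < 1 - x := by linarith
    have hB : 0 < 1 - r * x := by nlinarith
    set sA := Real.sqrt (1 - x) with hsA
    set sB := Real.sqrt (1 - r * x) with hsB
    set g := (1 + x) * (1 + r * x) with hg
    set sg := Real.sqrt g with hsg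
    have hsA0 : 0 < sA := Real.sqrt_pos.2 hA
    have hsB0 : 0 < sB := Real.sqrt_pos.2 hB
    have hsA2 : sA ^ 2 = 1 - x := Real.sq_sqrt hA.le
    have hsB2 : sB ^ 2 = 1 - r * x := Real.sq_sqrt hB.le
    have hg0 : 0 < g := by nlinarith [mul_nonneg hr0'.le hx0]
    have hsg0 : 0 < sg := Real.sqrt_pos.2 hg0
    have hsg1 : 1 ≤ sg := by
      rw [hsg, show (1:ℝ) = Real.sqrt 1 from (Real.sqrt_one).symm]
      apply Real.sqrt_le_sqrt
      nlinarith [mul_nonneg hr0'.le hx0]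
    have hsg2 : 2 - sB ^ 2 ≤ sg := by
      rw [hsB2]
      have h1rx : (0:ℝ) ≤ 1 + r * x := by nlinarith [mul_nonneg hr0'.le hx0]
      have : (1 + r * x) = Real.sqrt ((1 + r * x)^2) := (Real.sqrt_sq h1rx).symm
      rw [show 2 - (1 - r * x) = 1 + r * x by ring, this]
      apply Real.sqrt_le_sqrt
      have hxr : (0:ℝ) ≤ x - r * x := by nlinarith
      nlinarith [mul_nonneg h1rx hxr]
    have hsB1 : sB ≤ 1 := by
      have := Real.sqrt_le_sqrt (show 1 - r * x ≤ 1 by nlinarith [mul_nonneg hr0'.le hx0])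
      rw [Real.sqrt_one] at this
      exact this
    have hsplit : Real.sqrt ((1 - x^2) * (1 - r^2 * x^2)) = sA * sB * sg := by
      rw [show (1 - x^2) * (1 - r^2 * x^2) = ((1 - x) * (1 - r * x)) * g by rw [hg]; ring]
      rw [Real.sqrt_mul (by positivity), Real.sqrt_mul hA.le, ← hsA, ← hsB, ← hsg]
    show 1 / Real.sqrt ((1 - x^2) * (1 - r^2 * x^2))
        ≤ 1/2 * (1 / Real.sqrt ((1 - x) * (1 - r * x))) + (1 + 1 / sA)
    rw [hsplit, Real.sqrt_mul hA.le, ← hsA, ← hsB]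
    rw [div_le_iff₀ (mul_pos (mul_pos hsA0 hsB0) hsg0)]
    have expand : (1/2 * (1 / (sA * sB)) + (1 + 1 / sA)) * (sA * sB * sg)
        = sg / 2 + sA * sB * sg + sB * sg := by
      field_simp
      ring
    rw [expand]
    nlinarith [mul_le_mul_of_nonneg_left hsg1 hsB0.le,
      mul_nonneg (mul_nonneg hsA0.le hsB0.le) hsg0.le,
      mul_nonneg hsB0.le (by linarith : (0:ℝ) ≤ 2 - sB)]
  have hsplit2 : ∫ ξ in (0:ℝ)..1,
      (1/2 * (1 / Real.sqrt ((1 - ξ) * (1 - r * ξ))) + (1 + 1 / Real.sqrt (1 - ξ)))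
      = 1/2 * ((2 / Real.sqrt r) * Real.log (1 + Real.sqrt r)
          + (1 / Real.sqrt r) * Real.log (1 / (1 - r))) + 3 := by
    rw [integral_add hint1 hint2, intervalIntegral.integral_const_mul, int_h_eq hr0' hr1,
      integral_add intervalIntegrable_const int_inv_sqrt_one_sub, int_inv_sqrt_one_sub_eq]
    norm_num
  -- final arithmetic
  set L := Real.log (1 / (1 - r)) with hL
  set sr := Real.sqrt r with hsr
  have hsr2 : sr ^ 2 = r := Real.sq_sqrt hr0'.le
  have hsr07 : 0.7 ≤ sr := by nlinarith [Real.sqrt_nonneg r]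
  have hsr1 : sr ≤ 1 := by nlinarith [Real.sqrt_nonneg r]
  have h1r : (0:ℝ) < 1 - r := by linarith
  have hL0 : 0 ≤ L := by
    apply Real.log_nonneg
    rw [le_one_div (by norm_num) h1r]
    linarith
  have hLle : L ≤ r / (1 - r) := by
    have := Real.log_le_sub_one_of_pos (show (0:ℝ) < 1 / (1 - r) by positivity)
    rw [hL]
    calc Real.log (1 / (1 - r)) ≤ 1 / (1 - r) - 1 := this
      _ = r / (1 - r) := by field_simp; ring
  have hmul : L * (1 - sr) ≤ 1 := by
    have h2 : L * (1 - sr) ≤ (r / (1 - r)) * (1 - sr) :=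
      mul_le_mul_of_nonneg_right hLle (by linarith)
    have h3 : (r / (1 - r)) * (1 - sr) ≤ 1 := by
      rw [div_mul_eq_mul_div, div_le_one h1r]
      nlinarith [sq_nonneg (1 - r), sq_nonneg (1 - sr)]
    linarith
  have hlog2 : Real.log (1 + sr) ≤ 0.6931471808 := by
    calc Real.log (1 + sr) ≤ Real.log 2 := Real.log_le_log (by linarith) (by linarith)
      _ ≤ 0.6931471808 := Real.log_two_lt_d9.le
  have hlogpos : 0 ≤ Real.log (1 + sr) := Real.log_nonneg (by linarith)
  have hfinal : 1/2 * ((2 / sr) * Real.log (1 + sr) + (1 / sr) * L) + 3 ≤ L / 2 + 5 := by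
    have eL : 1/2 * ((2 / sr) * Real.log (1 + sr) + (1 / sr) * L)
        = (2 * Real.log (1 + sr) + L) / (2 * sr) := by
      field_simp
    have aux : (2 * Real.log (1 + sr) + L) / (2 * sr) ≤ L / 2 + 2 := by
      rw [div_le_iff₀ (by positivity : (0:ℝ) < 2 * sr)]
      nlinarith [hmul, hlog2, hsr07, hL0, hlogpos]
    linarith [eL.le, eL.ge, aux]
  linarith [hmono, hsplit2.le, hfinal]

end aux


theorem ellK_asymp_one :
    Tendsto (fun r : ℝ => ellK r / ((1 / 2) * Real.log (1 / (1 - r))))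
      (nhdsWithin 1 (Set.Iio (1:ℝ))) (nhds 1) := by
  have hL : Tendsto (fun r : ℝ => Real.log (1 / (1 - r))) (𝓝[<] (1:ℝ)) atTop := by
    have h1 : Tendsto (fun r : ℝ => 1 - r) (𝓝[<] (1:ℝ)) (𝓝[>] (0:ℝ)) := by
      apply tendsto_nhdsWithin_of_tendsto_nhds_of_eventually_within
      · have hc : Continuous (fun r : ℝ => 1 - r) := continuous_const.sub continuous_id
        have h0 : Tendsto (fun r : ℝ => 1 - r) (𝓝 (1:ℝ)) (𝓝 (0:ℝ)) := by
          simpa using hc.tendsto (1:ℝ)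
        exact h0.mono_left nhdsWithin_le_nhds
      · filter_upwards [self_mem_nhdsWithin] with r hr
        simp only [Set.mem_Iio] at hr
        exact Set.mem_Ioi.2 (by linarith)
    have h2 : Tendsto (fun r : ℝ => (1 - r)⁻¹) (𝓝[<] (1:ℝ)) atTop :=
      tendsto_inv_nhdsGT_zero.comp h1
    have h3 := Real.tendsto_log_atTop.comp h2
    have e : (fun r : ℝ => Real.log (1 / (1 - r))) = Real.log ∘ (fun r : ℝ => (1 - r)⁻¹) := by
      funext r
      simp [Function.comp, one_div]
    rw [e]
    exact h3
  have hEv : ∀ᶠ r in 𝓝[<] (1:ℝ), r ∈ Set.Ioo (1/2 : ℝ) 1 :=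
    Ioo_mem_nhdsLT_of_mem (by norm_num : (1:ℝ) ∈ Set.Ioc (1/2 : ℝ) 1)
  have hLpos : ∀ᶠ r in 𝓝[<] (1:ℝ), 0 < Real.log (1 / (1 - r)) :=
    hL.eventually_gt_atTop 0
  apply tendsto_of_tendsto_of_tendsto_of_le_of_le' (g := fun _ : ℝ => (1:ℝ))
    (h := fun r : ℝ => 1 + 10 / Real.log (1 / (1 - r)))
  · exact tendsto_const_nhds
  · have h0 : Tendsto (fun r : ℝ => 10 / Real.log (1 / (1 - r))) (𝓝[<] (1:ℝ)) (𝓝 0) :=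
      Tendsto.div_atTop tendsto_const_nhds hL
    have := tendsto_const_nhds.add h0 (f := fun _ : ℝ => (1:ℝ))
    simpa using this
  · filter_upwards [hEv, hLpos] with r hr hLp
    rw [le_div_iff₀ (by positivity)]
    have := ellK_ge hr.1.le hr.2
    linarith
  · filter_upwards [hEv, hLpos] with r hr hLp
    rw [div_le_iff₀ (by positivity)]
    have h5 := ellK_le hr.1.le hr.2
    have e : (1 + 10 / Real.log (1 / (1 - r))) * (1 / 2 * Real.log (1 / (1 - r)))
        = Real.log (1 / (1 - r)) / 2 + 5 := by
      field_simp
      ring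
    rw [e]
    exact h5
end

section
/- K(r')/K(r) is asymptotically equivalent to (2/π)·ln(1/r) as r → 0⁺, i.e., the ratio of the two quantities tends to 1. -/
set_option maxHeartbeats 1000000

open Real Filter Set Topology MeasureTheory intervalIntegral

lemma II_sqrt_one_sub : IntervalIntegrable (fun x : ℝ => 1 / Real.sqrt (1 - x)) volume 0 1 := by
  have h : IntervalIntegrable (fun x : ℝ => x ^ (-(1:ℝ)/2)) volume 0 1 :=
    intervalIntegrable_rpow' (by norm_num)
  have h2 := (h.comp_sub_left 1).symm
  simp only [sub_self, sub_zero] at h2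
  apply h2.mono_fun
  · apply Measurable.aestronglyMeasurable; fun_prop
  · refine Filter.Eventually.of_forall fun x => ?_
    dsimp only
    rcases le_or_gt (1:ℝ) x with hx | hx
    · have h1x : 1 - x ≤ 0 := by linarith
      rw [Real.sqrt_eq_zero_of_nonpos h1x]
      simp
    · have h1x : (0:ℝ) < 1 - x := by linarith
      have heq : (1 - x) ^ (-(1:ℝ)/2) = 1 / Real.sqrt (1 - x) := by
        rw [show (-(1:ℝ)/2) = -(1/2) by ring, Real.rpow_neg h1x.le,
          ← Real.sqrt_eq_rpow, one_div]
      rw [heq]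

lemma II_of_bound (f : ℝ → ℝ) (M : ℝ)
    (hm : AEStronglyMeasurable f (volume.restrict (Set.uIoc (0:ℝ) 1)))
    (hb : ∀ x ∈ Set.Ioc (0:ℝ) 1, |f x| ≤ M * (1 / Real.sqrt (1 - x))) :
    IntervalIntegrable f volume 0 1 := by
  apply (II_sqrt_one_sub.const_mul M).mono_fun hm
  filter_upwards [ae_restrict_mem measurableSet_uIoc] with x hx
  rw [Set.uIoc_of_le (by norm_num : (0:ℝ) ≤ 1)] at hx
  exact ((hb x hx).trans (le_abs_self _))

lemma ellK_integrand_II {r : ℝ} (hr : r^2 < 1) :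
    IntervalIntegrable (fun ξ : ℝ => 1 / Real.sqrt ((1 - ξ^2) * (1 - r^2 * ξ^2))) volume 0 1 := by
  apply II_of_bound _ (1 / Real.sqrt (1 - r^2))
  · apply Measurable.aestronglyMeasurable; fun_prop
  · intro x hx
    obtain ⟨hx0, hx1⟩ := hx
    rcases eq_or_lt_of_le hx1 with heq | hlt
    · subst heq
      simp
    · have h1x : (0:ℝ) < 1 - x := by linarith
      have hr1 : (0:ℝ) < 1 - r^2 := by linarith
      have hx2 : x^2 ≤ 1 := by nlinarith
      have hrx : r^2*x^2 ≤ 1 := by nlinarith [sq_nonneg r, sq_nonneg x]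
      have ha : 0 ≤ r^2*(1-x^2) := mul_nonneg (sq_nonneg r) (by linarith)
      have hb2 : 0 ≤ x*(1-r^2*x^2) := mul_nonneg hx0.le (by linarith)
      have key : 0 ≤ (1+x)*(1-r^2*x^2) - (1-r^2) := by nlinarith [ha, hb2]
      have h1 : Real.sqrt ((1-x)*(1-r^2)) ≤ Real.sqrt ((1-x^2)*(1-r^2*x^2)) := by
        apply Real.sqrt_le_sqrt
        nlinarith [mul_nonneg h1x.le key]
      have hpos : 0 < Real.sqrt ((1-x)*(1-r^2)) := Real.sqrt_pos.2 (by positivity)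
      rw [abs_of_nonneg (by positivity)]
      calc 1 / Real.sqrt ((1-x^2)*(1-r^2*x^2)) ≤ 1 / Real.sqrt ((1-x)*(1-r^2)) :=
            one_div_le_one_div_of_le hpos h1
        _ = 1 / Real.sqrt (1-r^2) * (1 / Real.sqrt (1-x)) := by
            rw [Real.sqrt_mul h1x.le]; ring

lemma integral_arcsin : ∫ x in (0:ℝ)..1, 1 / Real.sqrt (1 - x^2) = π / 2 := by
  have hInt : IntervalIntegrable (fun x : ℝ => 1 / Real.sqrt (1 - x^2)) volume 0 1 := by
    have := ellK_integrand_II (r := 0) (by norm_num)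
    simpa using this
  have := integral_eq_sub_of_hasDerivAt_of_le (f := Real.arcsin)
    (f' := fun x : ℝ => 1 / Real.sqrt (1 - x^2)) (by norm_num : (0:ℝ) ≤ 1)
    (Real.continuous_arcsin.continuousOn)
    (fun x hx => Real.hasDerivAt_arcsin (by intro h; rw [h] at hx; exact absurd hx.1 (by norm_num))
      (ne_of_lt hx.2)) hInt
  rw [this, Real.arcsin_one, Real.arcsin_zero, sub_zero]

-- FTC: 1/(s^2 - x^2)
lemma integral_inv_sq_sub {s b : ℝ} (hb : 0 ≤ b) (hbs : b < s) :
    ∫ x in (0:ℝ)..b, 1 / (s^2 - x^2)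
      = (Real.log (s + b) - Real.log (s - b)) / (2*s) := by
  have hs : 0 < s := lt_of_le_of_lt hb hbs
  have hderiv : ∀ x ∈ Set.uIcc (0:ℝ) b,
      HasDerivAt (fun y : ℝ => (Real.log (s + y) - Real.log (s - y)) / (2*s))
        (1 / (s^2 - x^2)) x := by
    intro x hx
    rw [Set.uIcc_of_le hb] at hx
    have hx0 : 0 ≤ x := hx.1
    have hxb : x ≤ b := hx.2
    have h1 : (0:ℝ) < s + x := by linarith
    have h2 : (0:ℝ) < s - x := by linarith
    have d1 : HasDerivAt (fun y : ℝ => Real.log (s + y)) (1/(s+x)) x := by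
      have := ((hasDerivAt_id x).const_add s).log h1.ne'
      simpa using this
    have d2 : HasDerivAt (fun y : ℝ => Real.log (s - y)) (-1/(s-x)) x := by
      have := ((hasDerivAt_id x).const_sub s).log h2.ne'
      simpa using this
    have hne : s^2 - x^2 ≠ 0 := by nlinarith
    have := (d1.sub d2).div_const (2*s)
    refine this.congr_deriv ?_
    field_simp
    ring
  rw [integral_eq_sub_of_hasDerivAt hderiv ?_]
  · simp
  · apply ContinuousOn.intervalIntegrable
    apply ContinuousOn.div continuousOn_const
    · fun_prop
    · intro x hx
      rw [Set.uIcc_of_le hb] at hx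
      have : x^2 ≤ b^2 := by nlinarith [hx.1, hx.2]
      nlinarith [hbs, hb]



lemma II_part2 {a : ℝ} (ha : 0 < a) :
    IntervalIntegrable (fun x : ℝ => 1 / Real.sqrt ((1-x)*(1-x+a))) volume 0 1 := by
  apply II_of_bound _ (1 / Real.sqrt a)
  · apply Measurable.aestronglyMeasurable; fun_prop
  · intro x hx
    rcases eq_or_lt_of_le hx.2 with heq | hlt
    · subst heq; simp
    · have h1x : (0:ℝ) < 1 - x := by linarith
      have h1 : Real.sqrt ((1-x)*a) ≤ Real.sqrt ((1-x)*(1-x+a)) := by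
        apply Real.sqrt_le_sqrt; nlinarith
      have hpos : 0 < Real.sqrt ((1-x)*a) := Real.sqrt_pos.2 (by positivity)
      rw [abs_of_nonneg (by positivity)]
      calc 1 / Real.sqrt ((1-x)*(1-x+a)) ≤ 1 / Real.sqrt ((1-x)*a) :=
            one_div_le_one_div_of_le hpos h1
        _ = 1 / Real.sqrt a * (1 / Real.sqrt (1-x)) := by
            rw [Real.sqrt_mul h1x.le]; ring

lemma integral_part2 {a δ : ℝ} (ha : 0 < a) (hδ : 0 < δ) (hδ1 : δ < 1) :
    ∫ x in (1-δ:ℝ)..1, 1 / Real.sqrt ((1-x)*(1-x+a))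
      = 2 * Real.log ((Real.sqrt δ + Real.sqrt (δ + a)) / Real.sqrt a) := by
  set F : ℝ → ℝ := fun x => -2 * Real.log (Real.sqrt (1-x) + Real.sqrt (1-x+a)) with hF
  have hle : (1-δ:ℝ) ≤ 1 := by linarith
  have hcont : ContinuousOn F (Set.Icc (1-δ) 1) := by
    apply ContinuousOn.mul continuousOn_const
    apply ContinuousOn.log
    · fun_prop
    · intro x hx
      have h1 : (0:ℝ) ≤ 1 - x := by linarith [hx.2]
      have h2 : (0:ℝ) < 1 - x + a := by linarith
      have := Real.sqrt_pos.2 h2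
      positivity
  have hderiv : ∀ x ∈ Set.Ioo (1-δ:ℝ) 1,
      HasDerivAt F (1 / Real.sqrt ((1-x)*(1-x+a))) x := by
    intro x hx
    have h1 : (0:ℝ) < 1 - x := by linarith [hx.2]
    have h2 : (0:ℝ) < 1 - x + a := by linarith
    have p := Real.sqrt_pos.2 h1
    have q := Real.sqrt_pos.2 h2
    have d1 : HasDerivAt (fun y : ℝ => Real.sqrt (1 - y)) (-1/(2*Real.sqrt (1-x))) x := by
      have h := (Real.hasDerivAt_sqrt h1.ne').comp x ((hasDerivAt_id x).const_sub 1)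
      simp only [Function.comp_def] at h
      refine h.congr_deriv ?_
      field_simp
    have d2 : HasDerivAt (fun y : ℝ => Real.sqrt (1 - y + a)) (-1/(2*Real.sqrt (1-x+a))) x := by
      have h3 : HasDerivAt (fun y : ℝ => 1 - y + a) (-1) x := by
        simpa using (((hasDerivAt_id x).const_sub 1).add_const a)
      have h := (Real.hasDerivAt_sqrt h2.ne').comp x h3
      simp only [Function.comp_def] at h
      refine h.congr_deriv ?_
      field_simp
    have hsum : HasDerivAt (fun y : ℝ => Real.sqrt (1-y) + Real.sqrt (1-y+a))
        (-1/(2*Real.sqrt (1-x)) + -1/(2*Real.sqrt (1-x+a))) x := d1.add d2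
    have hne : Real.sqrt (1-x) + Real.sqrt (1-x+a) ≠ 0 := by positivity
    have := (hsum.log hne).const_mul (-2 : ℝ)
    refine this.congr_deriv ?_
    rw [Real.sqrt_mul h1.le]
    field_simp
    ring
  have hint : IntervalIntegrable (fun x : ℝ => 1 / Real.sqrt ((1-x)*(1-x+a)))
      volume (1-δ) 1 := (II_part2 ha).mono_set (by
        rw [Set.uIcc_of_le hle, Set.uIcc_of_le (by norm_num : (0:ℝ) ≤ 1)]
        exact Set.Icc_subset_Icc (by linarith) le_rfl)
  rw [integral_eq_sub_of_hasDerivAt_of_le hle hcont hderiv hint]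
  have e1 : (1:ℝ) - 1 = 0 := by ring
  have e2 : (1:ℝ) - (1-δ) = δ := by ring
  rw [hF]
  simp only [e1, e2, Real.sqrt_zero, zero_add]
  rw [Real.log_div (by positivity) (by positivity : Real.sqrt a ≠ 0)]
  ring

lemma arcsin_II : IntervalIntegrable (fun x : ℝ => 1 / Real.sqrt (1 - x^2)) volume 0 1 := by
  have := ellK_integrand_II (r := 0) (by norm_num)
  simpa using this

lemma ellK_ge_s6 {r : ℝ} (hr : r^2 < 1) : π/2 ≤ ellK r := by
  rw [← integral_arcsin, ellK]
  apply intervalIntegral.integral_mono_on (by norm_num) arcsin_II (ellK_integrand_II hr)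
  intro x hx
  obtain ⟨hx0, hx1⟩ := hx
  rcases eq_or_lt_of_le hx1 with heq | hlt
  · subst heq; simp
  · have h1 : (0:ℝ) < 1 - x^2 := by nlinarith
    have h2 : (0:ℝ) < 1 - r^2*x^2 := by nlinarith [sq_nonneg (r*x), sq_nonneg x, sq_nonneg r]
    have hprod : (1-x^2)*(1-r^2*x^2) ≤ 1-x^2 := by nlinarith [sq_nonneg (r*x)]
    have hp : 0 < Real.sqrt ((1-x^2)*(1-r^2*x^2)) := Real.sqrt_pos.2 (by positivity)
    exact one_div_le_one_div_of_le hp (Real.sqrt_le_sqrt hprod)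

lemma ellK_le_s6 {r : ℝ} (hr : r^2 < 1) : ellK r ≤ π/2 * (1 / Real.sqrt (1-r^2)) := by
  have hr1 : (0:ℝ) < 1 - r^2 := by linarith
  have : ∫ x in (0:ℝ)..1, (1 / Real.sqrt (1-r^2)) * (1 / Real.sqrt (1 - x^2))
      = π/2 * (1 / Real.sqrt (1-r^2)) := by
    rw [intervalIntegral.integral_const_mul, integral_arcsin]; ring
  rw [← this, ellK]
  apply intervalIntegral.integral_mono_on (by norm_num) (ellK_integrand_II hr)
    (arcsin_II.const_mul _)
  intro x hx
  obtain ⟨hx0, hx1⟩ := hx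
  rcases eq_or_lt_of_le hx1 with heq | hlt
  · subst heq; simp
  · have h1 : (0:ℝ) < 1 - x^2 := by nlinarith
    have hprod : (1-x^2)*(1-r^2) ≤ (1-x^2)*(1-r^2*x^2) := by
      have hh : 0 ≤ r^2*(1-x^2)*(1-x^2) := by positivity
      nlinarith [hh]
    have hp : 0 < Real.sqrt ((1-x^2)*(1-r^2)) := Real.sqrt_pos.2 (by positivity)
    calc 1 / Real.sqrt ((1-x^2)*(1-r^2*x^2)) ≤ 1 / Real.sqrt ((1-x^2)*(1-r^2)) :=
          one_div_le_one_div_of_le hp (Real.sqrt_le_sqrt hprod)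
      _ = 1 / Real.sqrt (1-r^2) * (1 / Real.sqrt (1-x^2)) := by
          rw [Real.sqrt_mul h1.le]; ring

lemma ellK_tendsto : Tendsto ellK (𝓝[>] (0:ℝ)) (𝓝 (π/2)) := by
  have hmem : Set.Ioo (0:ℝ) 1 ∈ 𝓝[>] (0:ℝ) := Ioo_mem_nhdsGT_of_mem (by norm_num)
  apply tendsto_of_tendsto_of_tendsto_of_le_of_le'
    (g := fun _ : ℝ => π/2) (h := fun r : ℝ => π/2 * (1 / Real.sqrt (1-r^2)))
  · exact tendsto_const_nhds
  · have hc : ContinuousAt (fun r : ℝ => π/2 * (1 / Real.sqrt (1-r^2))) 0 := by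
      apply ContinuousAt.mul continuousAt_const
      apply ContinuousAt.div continuousAt_const
      · fun_prop
      · norm_num
    have h2 := hc.tendsto.mono_left (nhdsWithin_le_nhds (s := Set.Ioi (0:ℝ)))
    norm_num at h2
    simpa [one_div] using h2
  · filter_upwards [hmem] with r hr
    exact ellK_ge_s6 (by nlinarith [hr.1, hr.2])
  · filter_upwards [hmem] with r hr
    exact ellK_le_s6 (by nlinarith [hr.1, hr.2])

lemma ellK_comp {r : ℝ} (hr : r^2 ≤ 1) : ellK (Real.sqrt (1 - r^2)) =
    ∫ ξ in (0:ℝ)..1, 1 / Real.sqrt ((1 - ξ^2) * (1 - (1-r^2) * ξ^2)) := by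
  rw [ellK, Real.sq_sqrt (by linarith)]

lemma ellK_lower {r : ℝ} (hr0 : 0 < r) (hr1 : r < 1) :
    (Real.log (Real.sqrt (1+r^2) + 1) - Real.log r) / Real.sqrt (1+r^2)
      ≤ ellK (Real.sqrt (1 - r^2)) := by
  set s := Real.sqrt (1+r^2) with hs
  have hs2 : s^2 = 1 + r^2 := Real.sq_sqrt (by positivity)
  have hs0 : 0 < s := Real.sqrt_pos.2 (by positivity)
  have hs1 : 1 < s := by nlinarith
  have hrr : r^2 < 1 := by nlinarith
  have hr2 : (1-r^2)^2 ≤ 1 := by nlinarith [sq_nonneg r]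
  have hII := ellK_integrand_II (r := Real.sqrt (1-r^2)) (by
    rw [Real.sq_sqrt (by nlinarith)]; nlinarith)
  rw [ellK_comp (by nlinarith)]
  have hIIinv : IntervalIntegrable (fun x : ℝ => 1 / (s^2 - x^2)) volume 0 1 := by
    apply ContinuousOn.intervalIntegrable
    apply ContinuousOn.div continuousOn_const (by fun_prop)
    intro x hx
    rw [Set.uIcc_of_le (by norm_num : (0:ℝ) ≤ 1)] at hx
    have : x^2 ≤ 1 := by nlinarith [hx.1, hx.2]
    nlinarith
  have hII' : IntervalIntegrable
      (fun ξ : ℝ => 1 / Real.sqrt ((1 - ξ^2) * (1 - (1-r^2) * ξ^2))) volume 0 1 := by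
    have heq : (fun ξ : ℝ => 1 / Real.sqrt ((1 - ξ^2) * (1 - (1-r^2) * ξ^2)))
        = (fun ξ : ℝ => 1 / Real.sqrt ((1 - ξ^2) * (1 - (Real.sqrt (1-r^2))^2 * ξ^2))) := by
      funext ξ; rw [Real.sq_sqrt (by nlinarith)]
    rw [heq]; exact hII
  have hmono : ∫ x in (0:ℝ)..1, 1 / (s^2 - x^2)
      ≤ ∫ ξ in (0:ℝ)..1, 1 / Real.sqrt ((1 - ξ^2) * (1 - (1-r^2) * ξ^2)) := by
    apply intervalIntegral.integral_mono_ae_restrict (by norm_num) hIIinv hII'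
    have hne : ∀ᵐ x ∂(volume.restrict (Set.Icc (0:ℝ) 1)), x ≠ 1 := by
      refine ae_restrict_of_ae (ae_iff.2 ?_)
      have hset : {x : ℝ | ¬ x ≠ 1} = {1} := by ext x; simp
      rw [hset, measure_singleton]
    filter_upwards [hne, ae_restrict_mem measurableSet_Icc] with x hxne hx
    obtain ⟨hx0, hx1⟩ := hx
    have hxlt : x < 1 := lt_of_le_of_ne hx1 hxne
    have h1 : (0:ℝ) < 1 - x^2 := by nlinarith
    have h2 : (0:ℝ) < 1 - (1-r^2)*x^2 := by nlinarith
    have hd : (0:ℝ) < s^2 - x^2 := by nlinarith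
    have hx2 : x^2 ≤ 1 := by nlinarith
    have he1 : 0 ≤ r^2*(1-x^2)*(2-x^2) :=
      mul_nonneg (mul_nonneg (sq_nonneg r) h1.le) (by linarith)
    have hprod : (1 - x^2) * (1 - (1-r^2)*x^2) ≤ (s^2 - x^2)^2 := by
      nlinarith [he1, sq_nonneg (r^2), hs2]
    have hsq : Real.sqrt ((1 - x^2) * (1 - (1-r^2)*x^2)) ≤ s^2 - x^2 := by
      calc Real.sqrt ((1 - x^2) * (1 - (1-r^2)*x^2)) ≤ Real.sqrt ((s^2-x^2)^2) :=
            Real.sqrt_le_sqrt hprod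
        _ = s^2 - x^2 := Real.sqrt_sq hd.le
    exact one_div_le_one_div_of_le (Real.sqrt_pos.2 (by positivity)) hsq
  refine le_trans ?_ hmono
  rw [integral_inv_sq_sub (by norm_num) hs1]
  have hlog : Real.log (s - 1) = 2 * Real.log r - Real.log (s + 1) := by
    have hm : (s-1) * (s+1) = r^2 := by nlinarith
    have hlm := Real.log_mul (by nlinarith : s - 1 ≠ 0) (by nlinarith : s + 1 ≠ 0)
    rw [hm] at hlm
    have h2 : Real.log (r^2) = 2 * Real.log r := by
      rw [show r^2 = r*r by ring, Real.log_mul hr0.ne' hr0.ne']; ring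
    rw [h2] at hlm
    linarith
  rw [hlog]
  have : Real.log (s+1) - (2 * Real.log r - Real.log (s+1)) = 2*(Real.log (s+1) - Real.log r) := by ring
  rw [this]
  rw [show (2*(Real.log (s+1) - Real.log r)) / (2*s) = (Real.log (s+1) - Real.log r)/s by
    field_simp]

lemma ellK_upper {δ : ℝ} (hδ0 : 0 < δ) (hδ : δ ≤ 1/2) : ∃ C : ℝ, ∀ r : ℝ, 0 < r → r < 1 →
    ellK (Real.sqrt (1-r^2)) ≤ C + (2/(2-δ)) * (0 - Real.log r) := by
  have hδ1 : δ < 1 := by linarith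
  have h2δ : (0:ℝ) < 2 - δ := by linarith
  set c : ℝ := (1-δ)^2/(2-δ) with hc_def
  have hc : 0 < c := div_pos (pow_pos (by linarith) 2) h2δ
  set N : ℝ := Real.sqrt δ + Real.sqrt (δ + c) with hN_def
  have hN : 0 < N := by positivity
  set A : ℝ := ∫ x in (0:ℝ)..(1-δ), 1/(1-x^2) with hA_def
  refine ⟨A + (2/(2-δ)) * Real.log (N / Real.sqrt c), ?_⟩
  intro r hr0 hr1
  have hrr : r^2 < 1 := by nlinarith
  set a : ℝ := r^2 * c with ha_def
  have ha : 0 < a := by positivity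
  set g : ℝ → ℝ := fun ξ => 1 / Real.sqrt ((1 - ξ^2) * (1 - (1-r^2) * ξ^2)) with hg_def
  have hgII : IntervalIntegrable g volume 0 1 := by
    have heq : g = (fun ξ : ℝ => 1 / Real.sqrt ((1 - ξ^2) * (1 - (Real.sqrt (1-r^2))^2 * ξ^2))) := by
      funext ξ; rw [Real.sq_sqrt (by nlinarith)]
    rw [heq]
    exact ellK_integrand_II (by rw [Real.sq_sqrt (by nlinarith)]; nlinarith)
  have hsub1 : Set.uIoc (0:ℝ) (1-δ) ⊆ Set.uIoc (0:ℝ) 1 := by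
    rw [Set.uIoc_of_le (by linarith : (0:ℝ) ≤ 1-δ), Set.uIoc_of_le (by norm_num : (0:ℝ) ≤ 1)]
    exact Set.Ioc_subset_Ioc le_rfl (by linarith)
  have hsub2 : Set.uIoc (1-δ:ℝ) 1 ⊆ Set.uIoc (0:ℝ) 1 := by
    rw [Set.uIoc_of_le (by linarith : (1-δ:ℝ) ≤ 1), Set.uIoc_of_le (by norm_num : (0:ℝ) ≤ 1)]
    exact Set.Ioc_subset_Ioc (by linarith) le_rfl
  have h1 : IntervalIntegrable g volume 0 (1-δ) := hgII.mono_set' hsub1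
  have h2 : IntervalIntegrable g volume (1-δ) 1 := hgII.mono_set' hsub2
  rw [ellK_comp hrr.le, show (∫ ξ in (0:ℝ)..1, 1 / Real.sqrt ((1 - ξ^2) * (1 - (1-r^2) * ξ^2)))
      = (∫ ξ in (0:ℝ)..(1-δ), g ξ) + ∫ ξ in (1-δ:ℝ)..1, g ξ from
    (integral_add_adjacent_intervals h1 h2).symm]
  -- part 1
  have part1 : (∫ ξ in (0:ℝ)..(1-δ), g ξ) ≤ A := by
    rw [hA_def]
    apply intervalIntegral.integral_mono_on (by linarith) h1
    · apply ContinuousOn.intervalIntegrable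
      apply ContinuousOn.div continuousOn_const (by fun_prop)
      intro x hx
      rw [Set.uIcc_of_le (by linarith : (0:ℝ) ≤ 1-δ)] at hx
      have : x^2 ≤ (1-δ)^2 := by nlinarith [hx.1, hx.2]
      nlinarith
    · intro x hx
      obtain ⟨hx0, hx1⟩ := hx
      have hxx : x^2 ≤ (1-δ)^2 := by nlinarith
      have hpos : (0:ℝ) < 1 - x^2 := by nlinarith
      have hprod : (1-x^2)^2 ≤ (1-x^2)*(1-(1-r^2)*x^2) := by
        have : 0 ≤ (1-x^2) * (r^2 * x^2) := by positivity
        nlinarith [this]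
      have hs : 1 - x^2 ≤ Real.sqrt ((1-x^2)*(1-(1-r^2)*x^2)) := by
        calc 1 - x^2 = Real.sqrt ((1-x^2)^2) := (Real.sqrt_sq hpos.le).symm
          _ ≤ _ := Real.sqrt_le_sqrt hprod
      exact one_div_le_one_div_of_le hpos hs
  -- part 2
  have hhII : IntervalIntegrable (fun x : ℝ => 1 / Real.sqrt ((1-x)*(1-x+a))) volume (1-δ) 1 :=
    (II_part2 ha).mono_set' hsub2
  have part2 : (∫ ξ in (1-δ:ℝ)..1, g ξ)
      ≤ (2/(2-δ)) * (Real.log (N / Real.sqrt c) - Real.log r) := by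
    have step1 : (∫ ξ in (1-δ:ℝ)..1, g ξ)
        ≤ ∫ x in (1-δ:ℝ)..1, (1/(2-δ)) * (1 / Real.sqrt ((1-x)*(1-x+a))) := by
      apply intervalIntegral.integral_mono_on (by linarith) h2 (hhII.const_mul _)
      intro x hx
      obtain ⟨hx0, hx1⟩ := hx
      rcases eq_or_lt_of_le hx1 with heq | hlt
      · subst heq; simp [hg_def]
      · have hxpos : (0:ℝ) < x := by linarith
        have h1x : (0:ℝ) < 1 - x := by linarith
        have f1 : (2-δ)*(1-x) ≤ 1-x^2 := by nlinarith [mul_nonneg h1x.le (by linarith : (0:ℝ) ≤ x - (1-δ))]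
        have hxsq : (1-δ)^2 ≤ x^2 := by nlinarith
        have f2 : (2-δ)*(1-x) + r^2*(1-δ)^2 ≤ 1-(1-r^2)*x^2 := by
          nlinarith [f1, mul_le_mul_of_nonneg_left hxsq (sq_nonneg r)]
        have he : (2-δ)^2*((1-x)*(1-x+a)) = ((2-δ)*(1-x)) * ((2-δ)*(1-x) + r^2*(1-δ)^2) := by
          have haa : (2-δ)*a = r^2*(1-δ)^2 := by
            rw [ha_def, hc_def]; field_simp
          nlinarith [haa]
        have key : (2-δ)^2*((1-x)*(1-x+a)) ≤ (1-x^2)*(1-(1-r^2)*x^2) := by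
          rw [he]
          apply mul_le_mul f1 f2 (by positivity) (by nlinarith)
        have hq : (0:ℝ) < Real.sqrt ((1-x)*(1-x+a)) := Real.sqrt_pos.2 (by positivity)
        have hsq : (2-δ) * Real.sqrt ((1-x)*(1-x+a))
            ≤ Real.sqrt ((1-x^2)*(1-(1-r^2)*x^2)) := by
          have h := Real.sqrt_le_sqrt key
          rwa [Real.sqrt_mul (sq_nonneg _), Real.sqrt_sq h2δ.le] at h
        calc g x ≤ 1 / ((2-δ) * Real.sqrt ((1-x)*(1-x+a))) :=
              one_div_le_one_div_of_le (by positivity) hsq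
          _ = (1/(2-δ)) * (1 / Real.sqrt ((1-x)*(1-x+a))) := (one_div_mul_one_div _ _).symm
    have step2 : (∫ x in (1-δ:ℝ)..1, (1/(2-δ)) * (1 / Real.sqrt ((1-x)*(1-x+a))))
        = (1/(2-δ)) * (2 * Real.log ((Real.sqrt δ + Real.sqrt (δ+a)) / Real.sqrt a)) := by
      rw [intervalIntegral.integral_const_mul, integral_part2 ha hδ0 hδ1]
    have hsa : Real.sqrt a = r * Real.sqrt c := by
      rw [ha_def, Real.sqrt_mul (sq_nonneg r), Real.sqrt_sq hr0.le]
    have hlog : Real.log ((Real.sqrt δ + Real.sqrt (δ+a)) / Real.sqrt a)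
        ≤ Real.log (N / Real.sqrt c) - Real.log r := by
      have ha_le_c : a ≤ c := by nlinarith
      have hnum : Real.sqrt (δ+a) ≤ Real.sqrt (δ+c) := Real.sqrt_le_sqrt (by linarith)
      have harg : (Real.sqrt δ + Real.sqrt (δ+a)) / Real.sqrt a ≤ N / (r * Real.sqrt c) := by
        rw [hsa]
        have hden : (0:ℝ) < r * Real.sqrt c := by positivity
        exact (div_le_div_iff_of_pos_right hden).2 (by rw [hN_def]; gcongr)
      have h1' : Real.log ((Real.sqrt δ + Real.sqrt (δ+a)) / Real.sqrt a)
          ≤ Real.log (N / (r * Real.sqrt c)) :=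
        (Real.log_le_log_iff (by positivity) (by positivity)).2 harg
      have h2' : N / (r * Real.sqrt c) = (N / Real.sqrt c) / r := by ring
      rw [h2', Real.log_div (ne_of_gt (by positivity)) hr0.ne'] at h1'
      exact h1'
    calc (∫ ξ in (1-δ:ℝ)..1, g ξ)
        ≤ (1/(2-δ)) * (2 * Real.log ((Real.sqrt δ + Real.sqrt (δ+a)) / Real.sqrt a)) := by
          rw [← step2]; exact step1
      _ ≤ (2/(2-δ)) * (Real.log (N / Real.sqrt c) - Real.log r) := by
          have h' := mul_le_mul_of_nonneg_left hlog (le_of_lt (show (0:ℝ) < 2/(2-δ) by positivity))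
          calc (1/(2-δ)) * (2 * Real.log ((Real.sqrt δ + Real.sqrt (δ+a)) / Real.sqrt a))
              = (2/(2-δ)) * Real.log ((Real.sqrt δ + Real.sqrt (δ+a)) / Real.sqrt a) := by ring
            _ ≤ _ := h'
  linarith [part1, part2]

lemma mem_Ioo_eventually : ∀ᶠ r in 𝓝[>] (0:ℝ), r ∈ Set.Ioo (0:ℝ) 1 :=
  Ioo_mem_nhdsGT_of_mem (by norm_num)

lemma negLog_atTop : Tendsto (fun r : ℝ => 0 - Real.log r) (𝓝[>] (0:ℝ)) atTop := by
  have := tendsto_neg_atBot_atTop.comp Real.tendsto_log_nhdsGT_zero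
  simpa [Function.comp_def, zero_sub] using this

lemma core : Tendsto (fun r : ℝ => ellK (Real.sqrt (1 - r^2)) / (0 - Real.log r))
    (𝓝[>] (0:ℝ)) (𝓝 1) := by
  have hL := negLog_atTop
  have hLinv : Tendsto (fun r : ℝ => (0 - Real.log r)⁻¹) (𝓝[>] (0:ℝ)) (𝓝 0) :=
    hL.inv_tendsto_atTop
  rw [tendsto_order]
  constructor
  · intro b hb
    set G : ℝ → ℝ := fun r =>
      (Real.log (Real.sqrt (1+r^2) + 1) * (0 - Real.log r)⁻¹ + 1) / Real.sqrt (1+r^2) with hG_def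
    have t1 : Tendsto (fun r : ℝ => Real.log (Real.sqrt (1+r^2) + 1)) (𝓝[>] (0:ℝ))
        (𝓝 (Real.log 2)) := by
      have hc : ContinuousAt (fun r : ℝ => Real.log (Real.sqrt (1+r^2) + 1)) 0 := by
        apply ContinuousAt.log (by fun_prop)
        norm_num
      have := hc.tendsto.mono_left (nhdsWithin_le_nhds (s := Set.Ioi (0:ℝ)))
      norm_num at this
      convert this using 2 <;> norm_num
    have t3 : Tendsto (fun r : ℝ => Real.sqrt (1+r^2)) (𝓝[>] (0:ℝ)) (𝓝 1) := by
      have hc : ContinuousAt (fun r : ℝ => Real.sqrt (1+r^2)) 0 := by fun_prop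
      have := hc.tendsto.mono_left (nhdsWithin_le_nhds (s := Set.Ioi (0:ℝ)))
      norm_num at this
      exact this
    have hG : Tendsto G (𝓝[>] (0:ℝ)) (𝓝 1) := by
      have h := ((t1.mul hLinv).add_const 1).div t3 one_ne_zero
      have h1 : ((Real.log 2) * 0 + 1) / 1 = 1 := by norm_num
      rw [h1] at h
      exact h
    have hGF : ∀ᶠ r in 𝓝[>] (0:ℝ),
        G r ≤ ellK (Real.sqrt (1 - r^2)) / (0 - Real.log r) := by
      filter_upwards [mem_Ioo_eventually] with r hr
      obtain ⟨hr0, hr1⟩ := hr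
      have hLpos : 0 < 0 - Real.log r := by
        have := Real.log_neg hr0 hr1; linarith
      have hs : (0:ℝ) < Real.sqrt (1+r^2) := Real.sqrt_pos.2 (by positivity)
      have hGe : G r = ((Real.log (Real.sqrt (1+r^2) + 1) - Real.log r) / Real.sqrt (1+r^2))
          / (0 - Real.log r) := by
        have hLL : (0 - Real.log r) * (0 - Real.log r)⁻¹ = 1 := mul_inv_cancel₀ hLpos.ne'
        have key : Real.log (Real.sqrt (1+r^2)+1) * (0-Real.log r)⁻¹ + 1
            = (Real.log (Real.sqrt (1+r^2)+1) - Real.log r) * (0-Real.log r)⁻¹ := by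
          linear_combination -hLL
        rw [hG_def]
        simp only []
        rw [key, div_div]
        ring
      rw [hGe]
      gcongr
      exact ellK_lower hr0 hr1
    filter_upwards [hGF, hG.eventually (eventually_gt_nhds hb)] with r h1 h2
    exact lt_of_lt_of_le h2 h1
  · intro b hb
    set ε : ℝ := b - 1 with hε_def
    have hε : 0 < ε := by simp [hε_def]; linarith
    set δ : ℝ := min (1/2) (ε/2) with hδ_def
    have hδ0 : 0 < δ := lt_min (by norm_num) (by linarith)
    have hδh : δ ≤ 1/2 := min_le_left _ _
    have hδε : δ ≤ ε/2 := min_le_right _ _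
    obtain ⟨C, hC⟩ := ellK_upper hδ0 hδh
    have hk : 2/(2-δ) ≤ 1 + ε/2 := by
      rw [div_le_iff₀ (by linarith)]
      nlinarith
    have hCL : Tendsto (fun r : ℝ => C * (0 - Real.log r)⁻¹) (𝓝[>] (0:ℝ)) (𝓝 0) := by
      have := hLinv.const_mul C
      simpa using this
    filter_upwards [mem_Ioo_eventually, hCL.eventually (eventually_lt_nhds (by linarith : (0:ℝ) < ε/2)),
      hL.eventually_gt_atTop 0] with r hr hCr hLpos
    obtain ⟨hr0, hr1⟩ := hr
    have hle := hC r hr0 hr1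
    have : ellK (Real.sqrt (1 - r^2)) / (0 - Real.log r)
        ≤ C * (0 - Real.log r)⁻¹ + 2/(2-δ) := by
      have heq : (C + (2/(2-δ)) * (0 - Real.log r)) / (0 - Real.log r)
          = C * (0 - Real.log r)⁻¹ + 2/(2-δ) := by
        rw [add_div, mul_div_assoc, div_self hLpos.ne', mul_one, div_eq_mul_inv]
      rw [← heq]
      gcongr
    calc ellK (Real.sqrt (1 - r^2)) / (0 - Real.log r)
        ≤ C * (0 - Real.log r)⁻¹ + 2/(2-δ) := this
      _ < ε/2 + (1 + ε/2) := by
          have := hCr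
          linarith [hk]
      _ = b := by rw [hε_def]; ring

theorem ellK_ratio_asymp_zero :
    Tendsto
      (fun r : ℝ => (ellK (Real.sqrt (1 - r ^ 2)) / ellK r) / ((2 / Real.pi) * Real.log (1 / r)))
      (nhdsWithin 0 (Set.Ioi (0:ℝ))) (nhds 1) := by
  have hK : Tendsto (fun r : ℝ => (2/π) * ellK r) (𝓝[>] (0:ℝ)) (𝓝 1) := by
    have := ellK_tendsto.const_mul (2/π)
    have hval : (2/π) * (π/2) = 1 := by
      field_simp
    rwa [hval] at this
  have hdiv := core.div hK one_ne_zero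
  have h11 : (1:ℝ)/1 = 1 := by norm_num
  rw [h11] at hdiv
  apply hdiv.congr
  intro r
  simp only [Pi.div_apply]
  rw [show Real.log (1/r) = -Real.log r by rw [one_div, Real.log_inv]]
  ring
end

section
/- Let 0 < α, β with α + β < 2π, α < π, β < π, sin α > 0 and sin β > 0. If l is defined by l = (√(1-cos(α+β)) − √(2 sin α sin β)) / (√(1-cos(α+β)) + √(2 sin α sin β)), then the cross-ratio identity (−1/l+1)/(−1/l−1) · (1/l−1)/(1/l+1) = (e^{iβ}−e^{−iβ})/(e^{iβ}−e^{−iα}) · (e^{iα}−e^{−iα})/(e^{iα}−e^{−iβ}) holds, where the right-hand side is a complex cross-ratio of points on the unit circle (which is in fact real). -/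
open Real Complex

theorem crossRatio_identity (α β : ℝ) (hα : 0 < α) (hβ : 0 < β)
    (hαπ : α < Real.pi) (hβπ : β < Real.pi) (hsum : α + β < 2 * Real.pi)
    (hsα : 0 < Real.sin α) (hsβ : 0 < Real.sin β)
    (l : ℝ)
    (hl : l = (Real.sqrt (1 - Real.cos (α + β)) - Real.sqrt (2 * Real.sin α * Real.sin β)) /
              (Real.sqrt (1 - Real.cos (α + β)) + Real.sqrt (2 * Real.sin α * Real.sin β))) :
    ((-1 / (l : ℂ) + 1) / (-1 / (l : ℂ) - 1)) * ((1 / (l : ℂ) - 1) / (1 / (l : ℂ) + 1)) =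
      ((Complex.exp (β * Complex.I) - Complex.exp (-β * Complex.I)) /
        (Complex.exp (β * Complex.I) - Complex.exp (-α * Complex.I))) *
      ((Complex.exp (α * Complex.I) - Complex.exp (-α * Complex.I)) /
        (Complex.exp (α * Complex.I) - Complex.exp (-β * Complex.I))) := by
  -- basic positivity
  have hD : 1 - Real.cos (α + β) = 2 * Real.sin ((α + β) / 2) ^ 2 := by
    have h := Real.cos_two_mul' ((α + β) / 2)
    have h2 : 2 * ((α + β) / 2) = α + β := by ring
    rw [h2] at h
    nlinarith [Real.sin_sq_add_cos_sq ((α + β) / 2)]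
  have hsin2 : 0 < Real.sin ((α + β) / 2) :=
    Real.sin_pos_of_pos_of_lt_pi (by linarith) (by linarith)
  have hDpos : 0 < 1 - Real.cos (α + β) := by rw [hD]; positivity
  set s := Real.sqrt (1 - Real.cos (α + β)) with hs_def
  set t := Real.sqrt (2 * Real.sin α * Real.sin β) with ht_def
  have hs : 0 < s := Real.sqrt_pos.2 hDpos
  have ht : 0 < t := Real.sqrt_pos.2 (by positivity)
  have hs2 : s ^ 2 = 1 - Real.cos (α + β) := Real.sq_sqrt hDpos.le
  have ht2 : t ^ 2 = 2 * Real.sin α * Real.sin β := Real.sq_sqrt (by positivity)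
  have hst : s + t ≠ 0 := by positivity
  -- RHS computation
  set A := (α : ℂ) with hA
  set B := (β : ℂ) with hB
  have nA : Complex.exp (A * I) - Complex.exp (-A * I) = 2 * Complex.sin A * I := by
    rw [Complex.sin]; ring_nf; rw [Complex.I_sq]; ring
  have nB : Complex.exp (B * I) - Complex.exp (-B * I) = 2 * Complex.sin B * I := by
    rw [Complex.sin]; ring_nf; rw [Complex.I_sq]; ring
  have kprod : (Complex.exp (B * I) - Complex.exp (-A * I)) *
      (Complex.exp (A * I) - Complex.exp (-B * I)) =
      2 * ((Real.cos (α + β) : ℝ) : ℂ) - 2 := by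
    have e1 : Complex.exp (B * I) * Complex.exp (A * I) = Complex.exp ((A + B) * I) := by
      rw [← Complex.exp_add]; ring_nf
    have e2 : Complex.exp (B * I) * Complex.exp (-B * I) = 1 := by
      rw [← Complex.exp_add]; ring_nf; exact Complex.exp_zero
    have e3 : Complex.exp (-A * I) * Complex.exp (A * I) = 1 := by
      rw [← Complex.exp_add]; ring_nf; exact Complex.exp_zero
    have e4 : Complex.exp (-A * I) * Complex.exp (-B * I) = Complex.exp (-(A + B) * I) := by
      rw [← Complex.exp_add]; ring_nf
    have hcos : ((Real.cos (α + β) : ℝ) : ℂ) = Complex.cos (A + B) := by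
      rw [hA, hB, ← Complex.ofReal_add, Complex.ofReal_cos]
    rw [hcos, Complex.cos]
    have expand : (Complex.exp (B * I) - Complex.exp (-A * I)) *
        (Complex.exp (A * I) - Complex.exp (-B * I)) =
        Complex.exp (B * I) * Complex.exp (A * I) - Complex.exp (B * I) * Complex.exp (-B * I)
        - Complex.exp (-A * I) * Complex.exp (A * I)
        + Complex.exp (-A * I) * Complex.exp (-B * I) := by ring
    rw [expand, e1, e2, e3, e4]
    ring
  have hprod_ne : (Complex.exp (B * I) - Complex.exp (-A * I)) *
      (Complex.exp (A * I) - Complex.exp (-B * I)) ≠ 0 := by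
    rw [kprod]
    intro h
    have : ((Real.cos (α + β) : ℝ) : ℂ) = 1 := by linear_combination h / 2
    have : Real.cos (α + β) = 1 := by exact_mod_cast this
    linarith
  have hf1 := left_ne_zero_of_mul hprod_ne
  have hf2 := right_ne_zero_of_mul hprod_ne
  have hsinA : Complex.sin A = ((Real.sin α : ℝ) : ℂ) := by
    rw [hA, Complex.ofReal_sin]
  have hsinB : Complex.sin B = ((Real.sin β : ℝ) : ℂ) := by
    rw [hB, Complex.ofReal_sin]
  have hRHS : ((Complex.exp (B * I) - Complex.exp (-B * I)) /
        (Complex.exp (B * I) - Complex.exp (-A * I))) *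
      ((Complex.exp (A * I) - Complex.exp (-A * I)) /
        (Complex.exp (A * I) - Complex.exp (-B * I))) =
      ((t ^ 2 : ℝ) : ℂ) / ((s ^ 2 : ℝ) : ℂ) := by
    rw [div_mul_div_comm, nA, nB, hsinA, hsinB]
    rw [div_eq_div_iff hprod_ne (by exact_mod_cast (pow_ne_zero 2 hs.ne'))]
    rw [kprod, hs2, ht2]
    push_cast
    ring_nf
    rw [Complex.I_sq]
    ring
  rw [hRHS]
  -- LHS computation
  have hl' : l * (s + t) = s - t := by rw [hl]; field_simp
  rcases eq_or_ne l 0 with h0 | h0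
  · -- l = 0 : s = t
    have hseq : s = t := by
      have := hl'; rw [h0] at this; linarith
    rw [h0, hseq]
    norm_num
    rw [div_self (by exact_mod_cast (pow_ne_zero 2 ht.ne'))]
  · have h1l : 0 < 1 + l := by
      have : 1 + l = 2 * s / (s + t) := by
        rw [hl]; field_simp; ring
      rw [this]; positivity
    have h1l' : 0 < 1 - l := by
      have : 1 - l = 2 * t / (s + t) := by
        rw [hl]; field_simp; ring
      rw [this]; positivity
    have hlc : (l : ℂ) ≠ 0 := by exact_mod_cast h0
    have h1lc : (1 : ℂ) + (l : ℂ) ≠ 0 := by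
      intro h
      have : (1 : ℝ) + l = 0 := by exact_mod_cast h
      linarith
    have hratio : (1 - l) / (1 + l) = t / s := by
      rw [div_eq_div_iff h1l.ne' hs.ne']
      linear_combination -hl'
    have d1 : -1 / (l : ℂ) - 1 ≠ 0 := by
      rw [div_sub' hlc]
      exact div_ne_zero (by intro h; apply h1lc; linear_combination -h) hlc
    have d2 : 1 / (l : ℂ) + 1 ≠ 0 := by
      rw [div_add' _ _ _ hlc]
      exact div_ne_zero (by intro h; apply h1lc; linear_combination h) hlc
    have k1 : (-1 / (l : ℂ) + 1) / (-1 / (l : ℂ) - 1) = (1 - (l : ℂ)) / (1 + (l : ℂ)) := by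
      rw [div_eq_div_iff d1 h1lc]
      field_simp
      try ring
    have k2 : (1 / (l : ℂ) - 1) / (1 / (l : ℂ) + 1) = (1 - (l : ℂ)) / (1 + (l : ℂ)) := by
      rw [div_eq_div_iff d2 h1lc]
      field_simp
      try ring
    have key : ((-1 / (l : ℂ) + 1) / (-1 / (l : ℂ) - 1)) * ((1 / (l : ℂ) - 1) / (1 / (l : ℂ) + 1))
        = ((1 - (l : ℂ)) / (1 + (l : ℂ))) ^ 2 := by
      rw [k1, k2, sq]
    rw [key]
    have : ((1 - (l : ℂ)) / (1 + (l : ℂ))) = (((1 - l) / (1 + l) : ℝ) : ℂ) := by push_cast; ring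
    rw [this, hratio]
    push_cast
    rw [div_pow]
end
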